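/- Let λ ∈ ℂ with λ ≠ 0 and λ ≠ 1, and let k ≥ 1 and l ≥ 1 be integers. Then B_l(λ; k) − λ^{−k}·B_l(λ) = λ^{−k}·l·∑_{n=0}^{k−1} λ^n·n^{l−1} + λ^{−k}·(Log λ)·∑_{n=0}^{k−1} λ^n·n^l, with the convention 0^0 = 1 (the λ-analogue of the sums-of-powers formula). -/

import Mathlib

open Finset

/-- The λ-Bernoulli numbers `B_n(λ)`, defined by `B_0(λ) = Log λ / (λ - 1)` and, for `n ≥ 1`,
by the recurrence `λ·∑_{k=0}^{n} C(n,k)·B_k(λ) - B_n(λ) = (1 if n = 1, 0 if n ≥ 2)`,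
encoding the generating function `(Log λ + t)/(λ e^t - 1) = ∑ B_n(λ) t^n/n!`. -/
noncomputable def lambdaBernoulli (lam : ℂ) : ℕ → ℂ
  | 0 => Complex.log lam / (lam - 1)
  | n + 1 =>
      ((if n = 0 then (1 : ℂ) else 0) -
        lam * ∑ k : Fin (n + 1), ((n + 1).choose (k : ℕ) : ℂ) * lambdaBernoulli lam k) / (lam - 1)

/-- The λ-Bernoulli polynomials `B_n(λ; x) = ∑_{k=0}^{n} C(n,k)·B_k(λ)·x^{n-k}`. -/
noncomputable def lambdaBernoulliPoly (lam : ℂ) (n : ℕ) (x : ℂ) : ℂ :=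
  ∑ k ∈ Finset.range (n + 1), (n.choose k : ℂ) * lambdaBernoulli lam k * x ^ (n - k)

lemma lambdaBernoulli_rec (lam : ℂ) (h1 : lam ≠ 1) (n : ℕ) :
    lam * ∑ j ∈ range (n + 1), (n.choose j : ℂ) * lambdaBernoulli lam j -
      lambdaBernoulli lam n =
      if n = 0 then Complex.log lam else if n = 1 then 1 else 0 := by
  have hne : lam - 1 ≠ 0 := sub_ne_zero.mpr h1
  cases n with
  | zero =>
      have hB0 : lambdaBernoulli lam 0 = Complex.log lam / (lam - 1) := by
        rw [lambdaBernoulli]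
      rw [range_one, sum_singleton, hB0]
      norm_num
      field_simp
  | succ n =>
      have hB : (lam - 1) * lambdaBernoulli lam (n + 1) =
          (if n = 0 then (1 : ℂ) else 0) -
            lam * ∑ j ∈ range (n + 1), ((n + 1).choose j : ℂ) * lambdaBernoulli lam j := by
        rw [lambdaBernoulli,
          Fin.sum_univ_eq_sum_range (fun j => ((n + 1).choose j : ℂ) * lambdaBernoulli lam j)]
        rw [mul_comm, div_mul_cancel₀ _ hne]
      rw [sum_range_succ]
      simp only [Nat.choose_self, Nat.cast_one, one_mul, Nat.succ_ne_zero, if_false]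
      have hif : (if n + 1 = 1 then (1 : ℂ) else 0) = (if n = 0 then 1 else 0) := by simp
      rw [hif]
      linear_combination hB

lemma pow_add_one_expand (x : ℂ) {k l : ℕ} (hk : k ≤ l) :
    (x + 1) ^ (l - k) =
      ∑ i ∈ Finset.Ico k (l + 1), x ^ (l - i) * (((l - k).choose (i - k) : ℕ) : ℂ) := by
  rw [Finset.sum_Ico_eq_sum_range]
  have h1 : l + 1 - k = (l - k) + 1 := by omega
  rw [h1, add_pow, ← Finset.sum_range_reflect]
  apply Finset.sum_congr rfl
  intro t ht
  rw [Finset.mem_range] at ht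
  have ht' : t ≤ l - k := by omega
  have e1 : l - k + 1 - 1 - t = l - k - t := by omega
  have e2 : k + t - k = t := by omega
  have e3 : l - (k + t) = l - k - t := by omega
  rw [e1, e2, e3, one_pow, mul_one, Nat.choose_symm ht']

lemma lambdaBernoulliPoly_step (lam : ℂ) (h1 : lam ≠ 1) {l : ℕ} (hl : 1 ≤ l) (x : ℂ) :
    lam * lambdaBernoulliPoly lam l (x + 1) - lambdaBernoulliPoly lam l x =
      (l : ℂ) * x ^ (l - 1) + Complex.log lam * x ^ l := by
  have expand : lam * lambdaBernoulliPoly lam l (x + 1) =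
      ∑ k ∈ Ico 0 (l + 1), ∑ i ∈ Ico k (l + 1),
        lam * (l.choose k : ℂ) * lambdaBernoulli lam k *
          (x ^ (l - i) * ((l - k).choose (i - k) : ℂ)) := by
    rw [lambdaBernoulliPoly, mul_sum, ← Nat.Ico_zero_eq_range]
    apply sum_congr rfl
    intro k hk
    rw [mem_Ico] at hk
    rw [pow_add_one_expand x (by omega : k ≤ l), mul_sum, mul_sum]
    exact sum_congr rfl fun i _ => by ring
  rw [expand, sum_Ico_Ico_comm, Nat.Ico_zero_eq_range]
  simp only [Nat.Ico_zero_eq_range]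
  have inner : ∀ i ∈ range (l + 1),
      (∑ k ∈ range (i + 1),
        lam * (l.choose k : ℂ) * lambdaBernoulli lam k *
          (x ^ (l - i) * ((l - k).choose (i - k) : ℂ))) =
      (l.choose i : ℂ) * x ^ (l - i) *
        (lam * ∑ j ∈ range (i + 1), (i.choose j : ℂ) * lambdaBernoulli lam j) := by
    intro i hi
    rw [mem_range] at hi
    rw [mul_sum, mul_sum]
    apply sum_congr rfl
    intro j hj
    rw [mem_range] at hj
    have hcn := Nat.choose_mul (n := l) (show j ≤ i by omega)
    have hc : ((l.choose i : ℕ) : ℂ) * ((i.choose j : ℕ) : ℂ) =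
        ((l.choose j : ℕ) : ℂ) * (((l - j).choose (i - j) : ℕ) : ℂ) := by
      exact_mod_cast congrArg (Nat.cast : ℕ → ℂ) hcn
    linear_combination (-(lam * lambdaBernoulli lam j * x ^ (l - i))) * hc
  rw [sum_congr rfl inner, lambdaBernoulliPoly, ← sum_sub_distrib]
  have final : ∀ i ∈ range (l + 1),
      (l.choose i : ℂ) * x ^ (l - i) *
          (lam * ∑ j ∈ range (i + 1), (i.choose j : ℂ) * lambdaBernoulli lam j) -
        (l.choose i : ℂ) * lambdaBernoulli lam i * x ^ (l - i) =
      (if i = 0 then Complex.log lam * x ^ l else 0) +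
        (if i = 1 then (l : ℂ) * x ^ (l - 1) else 0) := by
    intro i hi
    have hrec := lambdaBernoulli_rec lam h1 i
    have : (l.choose i : ℂ) * x ^ (l - i) *
          (lam * ∑ j ∈ range (i + 1), (i.choose j : ℂ) * lambdaBernoulli lam j) -
        (l.choose i : ℂ) * lambdaBernoulli lam i * x ^ (l - i) =
        (l.choose i : ℂ) * x ^ (l - i) *
          (if i = 0 then Complex.log lam else if i = 1 then 1 else 0) := by
      linear_combination (l.choose i : ℂ) * x ^ (l - i) * hrec
    rw [this]
    rcases i with _ | _ | i
    · simp [mul_comm]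
    · simp [mul_comm]
    · simp
  rw [sum_congr rfl final, sum_add_distrib, sum_ite_eq' (range (l + 1)) 0,
    sum_ite_eq' (range (l + 1)) 1]
  have h0 : (0 : ℕ) ∈ range (l + 1) := by simp
  have h1' : (1 : ℕ) ∈ range (l + 1) := by rw [mem_range]; omega
  rw [if_pos h0, if_pos h1']
  ring

lemma lambdaBernoulliPoly_zero_eval (lam : ℂ) (l : ℕ) :
    lambdaBernoulliPoly lam l 0 = lambdaBernoulli lam l := by
  rw [lambdaBernoulliPoly, sum_range_succ, Nat.sub_self, pow_zero, Nat.choose_self,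
    Nat.cast_one, one_mul, mul_one]
  rw [sum_eq_zero, zero_add]
  intro k hk
  rw [mem_range] at hk
  rw [zero_pow (by omega : l - k ≠ 0), mul_zero]

theorem lambdaBernoulliPoly_sum_of_powers (lam : ℂ) (h0 : lam ≠ 0) (h1 : lam ≠ 1)
    (k l : ℕ) (hk : 1 ≤ k) (hl : 1 ≤ l) :
    lambdaBernoulliPoly lam l (k : ℂ) - (lam ^ k)⁻¹ * lambdaBernoulli lam l =
      (lam ^ k)⁻¹ * (l : ℂ) * (∑ n ∈ Finset.range k, lam ^ n * (n : ℂ) ^ (l - 1)) +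
        (lam ^ k)⁻¹ * Complex.log lam * ∑ n ∈ Finset.range k, lam ^ n * (n : ℂ) ^ l := by
  have tel : ∀ n : ℕ,
      lam ^ (n + 1) * lambdaBernoulliPoly lam l ((n + 1 : ℕ) : ℂ) -
        lam ^ n * lambdaBernoulliPoly lam l ((n : ℕ) : ℂ) =
      lam ^ n * ((l : ℂ) * (n : ℂ) ^ (l - 1)) +
        lam ^ n * (Complex.log lam * (n : ℂ) ^ l) := by
    intro n
    have hstep := lambdaBernoulliPoly_step lam h1 hl (n : ℂ)
    push_cast
    calc lam ^ (n + 1) * lambdaBernoulliPoly lam l ((n : ℂ) + 1) -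
          lam ^ n * lambdaBernoulliPoly lam l (n : ℂ) =
        lam ^ n * (lam * lambdaBernoulliPoly lam l ((n : ℂ) + 1) -
          lambdaBernoulliPoly lam l (n : ℂ)) := by ring
      _ = lam ^ n * ((l : ℂ) * (n : ℂ) ^ (l - 1)) +
            lam ^ n * (Complex.log lam * (n : ℂ) ^ l) := by rw [hstep]; ring
  have hsum := Finset.sum_range_sub (fun n => lam ^ n * lambdaBernoulliPoly lam l ((n : ℕ) : ℂ)) k
  rw [sum_congr rfl (fun n _ => tel n)] at hsum
  rw [sum_add_distrib] at hsum
  simp only [pow_zero, one_mul, Nat.cast_zero, lambdaBernoulliPoly_zero_eval] at hsum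
  have hlk : lam ^ k ≠ 0 := pow_ne_zero _ h0
  have e1 : ∑ n ∈ range k, lam ^ n * ((l : ℂ) * (n : ℂ) ^ (l - 1)) =
      (l : ℂ) * ∑ n ∈ range k, lam ^ n * (n : ℂ) ^ (l - 1) := by
    rw [mul_sum]; exact sum_congr rfl fun n _ => by ring
  have e2 : ∑ n ∈ range k, lam ^ n * (Complex.log lam * (n : ℂ) ^ l) =
      Complex.log lam * ∑ n ∈ range k, lam ^ n * (n : ℂ) ^ l := by
    rw [mul_sum]; exact sum_congr rfl fun n _ => by ring
  rw [e1, e2] at hsum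
  field_simp
  linear_combination -hsum
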